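/- Let X be a Banach space and 1 < p < ∞. The following are equivalent: (i) every coarse p-limited, relatively weakly compact subset of X is relatively norm compact; (ii) every coarse p-limited, weakly null sequence in X is norm null; (iii) every coarse p-limited, weakly precompact subset of X is relatively norm compact. -/

import Mathlib

open Filter Topology NormedSpace
open scoped ENNReal NNReal

/-- `Z`, together with the continuous bilinear map `m`, is (a realization of) the projective
tensor product `X ⊗̂π Y`: the span of elementary tensors is dense, and every continuous bilinear
map into a Banach space lifts to a continuous linear map on `Z` with the same norm. -/
structure IsProjTensorProduct (X Y Z : Type*) [NormedAddCommGroup X] [NormedSpace ℝ X]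
    [NormedAddCommGroup Y] [NormedSpace ℝ Y] [NormedAddCommGroup Z] [NormedSpace ℝ Z]
    (m : X →L[ℝ] Y →L[ℝ] Z) : Prop where
  dense_span : Dense (Submodule.span ℝ {z : Z | ∃ x y, m x y = z} : Set Z)
  lift : ∀ (W : Type) [NormedAddCommGroup W] [NormedSpace ℝ W] [CompleteSpace W]
    (B : X →L[ℝ] Y →L[ℝ] W), ∃ T : Z →L[ℝ] W, ‖T‖ = ‖B‖ ∧ ∀ x y, T (m x y) = B x y

/-- A set is relatively weakly compact if its closure in the weak topology is weakly compact. -/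
def RelWeakCompact (X : Type*) [SeminormedAddCommGroup X] [NormedSpace ℝ X] (A : Set X) : Prop :=
  IsCompact (closure ((toWeakSpace ℝ X) '' A))

/-- A set is relatively norm compact if its norm closure is compact. -/
def RelNormCompact (X : Type*) [SeminormedAddCommGroup X] [NormedSpace ℝ X] (A : Set X) : Prop :=
  IsCompact (closure A)

/-- A sequence is weakly Cauchy if every continuous functional sends it to a convergent sequence. -/
def WeaklyCauchySeq {X : Type*} [SeminormedAddCommGroup X] [NormedSpace ℝ X] (x : ℕ → X) : Prop :=
  ∀ f : X →L[ℝ] ℝ, ∃ l : ℝ, Tendsto (fun n => f (x n)) atTop (nhds l)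

/-- A sequence is weakly null if it converges to `0` in the weak topology. -/
def WeaklyNullSeq {X : Type*} [SeminormedAddCommGroup X] [NormedSpace ℝ X] (x : ℕ → X) : Prop :=
  ∀ f : X →L[ℝ] ℝ, Tendsto (fun n => f (x n)) atTop (nhds 0)

/-- A set is weakly precompact if every sequence in it has a weakly Cauchy subsequence. -/
def WeaklyPrecompact {X : Type*} [SeminormedAddCommGroup X] [NormedSpace ℝ X] (A : Set X) : Prop :=
  ∀ x : ℕ → X, (∀ n, x n ∈ A) → ∃ φ : ℕ → ℕ, StrictMono φ ∧ WeaklyCauchySeq (x ∘ φ)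

/-- A (weakly) compact operator maps the closed unit ball to a relatively (weakly) compact set. -/
def WeaklyCompactOp {X Y : Type*} [SeminormedAddCommGroup X] [NormedSpace ℝ X]
    [SeminormedAddCommGroup Y] [NormedSpace ℝ Y] (T : X →L[ℝ] Y) : Prop :=
  RelWeakCompact Y (T '' Metric.closedBall 0 1)

/-- A set `A ⊆ X` is coarse `p`-limited if `T(A)` is relatively norm compact in `ℓp` for every
bounded operator `T : X → ℓp`. -/
def CoarsePLimited (p : ℝ≥0∞) [Fact (1 ≤ p)] {X : Type*} [NormedAddCommGroup X]
    [NormedSpace ℝ X] (A : Set X) : Prop :=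
  ∀ T : X →L[ℝ] lp (fun _ : ℕ => ℝ) p, RelNormCompact _ (T '' A)

section Aux
open Set
open scoped Pointwise

variable {X : Type*} [NormedAddCommGroup X] [NormedSpace ℝ X]

lemma eq_zero_of_forall_dual (x : X) (h : ∀ f : X →L[ℝ] ℝ, f x = 0) : x = 0 := by
  by_contra hx
  obtain ⟨g, -, hg⟩ := exists_dual_vector ℝ x (norm_ne_zero_iff.mpr hx)
  have := h g
  rw [this] at hg
  exact hx (by simpa [eq_comm, norm_eq_zero] using hg)

lemma t2_weakSpace : T2Space (WeakSpace ℝ X) := by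
  refine T2Space.of_injective_continuous (f := fun (z : WeakSpace ℝ X) (f : X →L[ℝ] ℝ) =>
    f ((toWeakSpace ℝ X).symm z)) ?_ ?_
  · intro u v huv
    have h : ∀ f : X →L[ℝ] ℝ, f ((toWeakSpace ℝ X).symm u - (toWeakSpace ℝ X).symm v) = 0 := by
      intro f
      rw [map_sub]
      have := congrFun huv f
      simp only at this
      rw [this]; ring
    have := eq_zero_of_forall_dual _ h
    have h2 : (toWeakSpace ℝ X).symm u = (toWeakSpace ℝ X).symm v := by
      rwa [sub_eq_zero] at this
    exact (toWeakSpace ℝ X).symm.injective h2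
  · refine continuous_pi fun f => ?_
    exact WeakBilin.eval_continuous ((topDualPairing ℝ X).flip) f

lemma weakTendsto_iff {l : Filter ℕ} {x : ℕ → X} {y : X} :
    Tendsto (fun n => toWeakSpace ℝ X (x n)) l (𝓝 (toWeakSpace ℝ X y)) ↔
      ∀ f : X →L[ℝ] ℝ, Tendsto (fun n => f (x n)) l (𝓝 (f y)) := by
  have hinj : Function.Injective ((topDualPairing ℝ X).flip) := by
    intro u v huv
    have : ∀ f : X →L[ℝ] ℝ, f (u - v) = 0 := by
      intro f
      have := congrArg (fun g => g f) huv
      simp only [LinearMap.flip_apply, topDualPairing_apply] at this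
      rw [map_sub, this]; ring
    have := eq_zero_of_forall_dual _ this
    rwa [sub_eq_zero] at this
  exact WeakBilin.tendsto_iff_forall_eval_tendsto (B := (topDualPairing ℝ X).flip) hinj

lemma RelNormCompact.mono {A B : Set X} (hA : RelNormCompact X A) (h : B ⊆ A) :
    RelNormCompact X B :=
  IsCompact.of_isClosed_subset hA isClosed_closure (closure_mono h)

lemma CoarsePLimited.mono (p : ℝ≥0∞) [Fact (1 ≤ p)] {A B : Set X}
    (hA : CoarsePLimited p A) (h : B ⊆ A) : CoarsePLimited p B := fun T =>
  (hA T).mono (Set.image_mono h)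

lemma CoarsePLimited.sub (p : ℝ≥0∞) [Fact (1 ≤ p)] {A : Set X}
    (hA : CoarsePLimited p A) : CoarsePLimited p (A - A) := by
  intro T
  have h1 : IsCompact (closure (T '' A) - closure (T '' A)) := by
    rw [sub_eq_add_neg]
    exact IsCompact.add (hA T) (IsCompact.neg (hA T))
  refine IsCompact.of_isClosed_subset h1 isClosed_closure (closure_minimal ?_ h1.isClosed)
  rintro - ⟨-, ⟨u, hu, v, hv, rfl⟩, rfl⟩
  rw [map_sub]
  exact Set.sub_mem_sub (subset_closure (Set.mem_image_of_mem _ hu))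
    (subset_closure (Set.mem_image_of_mem _ hv))

lemma normNull_of_weaklyNull_relNormCompact {x : ℕ → X} (hx : WeaklyNullSeq x)
    (hc : RelNormCompact X (Set.range x)) :
    Tendsto (fun n => ‖x n‖) atTop (𝓝 0) := by
  by_contra h
  rw [Metric.tendsto_atTop] at h
  push_neg at h
  obtain ⟨ε, hε, hfreq⟩ := h
  have hfr : ∃ᶠ n in atTop, ε ≤ ‖x n‖ := by
    rw [frequently_atTop]
    intro N; obtain ⟨n, hn, hd⟩ := hfreq N
    exact ⟨n, hn, by simpa [Real.dist_eq, abs_of_nonneg (norm_nonneg _)] using hd⟩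
  obtain ⟨φ, hφ, hφε⟩ := extraction_of_frequently_atTop hfr
  have hsub : ∀ n, x (φ n) ∈ closure (Set.range x) := fun n => subset_closure ⟨φ n, rfl⟩
  obtain ⟨a, -, ψ, hψ, hconv⟩ := IsCompact.isSeqCompact hc hsub
  have ha : a = 0 := by
    apply eq_zero_of_forall_dual
    intro f
    have h1 : Tendsto (fun n => f (x (φ (ψ n)))) atTop (𝓝 (f a)) :=
      (f.continuous.tendsto a).comp hconv
    have h2 : Tendsto (fun n => f (x (φ (ψ n)))) atTop (𝓝 0) :=
      (hx f).comp ((hφ.comp hψ).tendsto_atTop)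
    exact tendsto_nhds_unique h1 h2
  have hnrm : Tendsto (fun n => ‖x (φ (ψ n))‖) atTop (𝓝 0) := by
    rw [ha] at hconv
    simpa using hconv.norm
  have := ge_of_tendsto hnrm (Eventually.of_forall fun n => hφε (ψ n))
  linarith

lemma relWeakCompact_range_of_weaklyNull {x : ℕ → X} (hx : WeaklyNullSeq x) :
    RelWeakCompact X (Set.range x) := by
  haveI : T2Space (WeakSpace ℝ X) := t2_weakSpace
  have ht : Tendsto (fun n => toWeakSpace ℝ X (x n)) atTop (𝓝 (toWeakSpace ℝ X 0)) := by
    rw [weakTendsto_iff]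
    intro f; simpa using hx f
  have hK : IsCompact (insert (toWeakSpace ℝ X 0) (Set.range fun n => toWeakSpace ℝ X (x n))) :=
    ht.isCompact_insert_range
  refine IsCompact.of_isClosed_subset hK isClosed_closure (closure_minimal ?_ hK.isClosed)
  rintro - ⟨-, ⟨n, rfl⟩, rfl⟩
  exact Set.mem_insert_of_mem _ ⟨n, rfl⟩

lemma weaklyPrecompact_range_of_weaklyNull {x : ℕ → X} (hx : WeaklyNullSeq x) :
    WeaklyPrecompact (Set.range x) := by
  intro b hb
  choose k hk using hb
  by_cases hfin : ∃ v, ∃ᶠ n in atTop, k n = v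
  · obtain ⟨v, hv⟩ := hfin
    obtain ⟨φ, hφ, hφv⟩ := extraction_of_frequently_atTop hv
    refine ⟨φ, hφ, fun f => ⟨f (x v), ?_⟩⟩
    have hcst : ∀ n, f (b (φ n)) = f (x v) := fun n => by rw [← hk (φ n), hφv n]
    simpa [Function.comp_def, hcst] using (tendsto_const_nhds : Tendsto (fun _ : ℕ => f (x v)) atTop _)
  · push_neg at hfin
    have hkt : Tendsto k atTop atTop := by
      rw [tendsto_atTop]
      intro m
      have hev : ∀ᶠ n in atTop, ∀ v ∈ Finset.range m, k n ≠ v :=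
        (eventually_all_finset _).mpr fun v _ => (hfin v)
      filter_upwards [hev] with n hn
      by_contra hlt
      exact hn (k n) (Finset.mem_range.mpr (not_le.mp hlt)) rfl
    refine ⟨id, strictMono_id, fun f => ⟨0, ?_⟩⟩
    have := (hx f).comp hkt
    simpa [Function.comp_def, hk] using this

lemma cauchySeq_of_weaklyCauchy (p : ℝ≥0∞) [Fact (1 ≤ p)]
    (hseq : ∀ z : ℕ → X, CoarsePLimited p (Set.range z) → WeaklyNullSeq z →
      Tendsto (fun n => ‖z n‖) atTop (𝓝 0))
    {A : Set X} (hA : CoarsePLimited p A) {y : ℕ → X} (hy : ∀ n, y n ∈ A)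
    (hwc : WeaklyCauchySeq y) : CauchySeq y := by
  rw [Metric.cauchySeq_iff]
  by_contra h
  push_neg at h
  obtain ⟨ε, hε, hbad⟩ := h
  have hsel : ∀ N : ℕ, ∃ mn : ℕ × ℕ, N ≤ mn.1 ∧ N ≤ mn.2 ∧ ε ≤ dist (y mn.1) (y mn.2) := by
    intro N; obtain ⟨m, hm, n, hn, hd⟩ := hbad N; exact ⟨(m, n), hm, hn, hd⟩
  choose g hg1 hg2 hg3 using hsel
  set F : ℕ → ℕ := fun N => Nat.rec 0 (fun _ M => (g M).1 + (g M).2 + 1) N with hFdef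
  have hFsucc : ∀ k, F (k + 1) = (g (F k)).1 + (g (F k)).2 + 1 := fun k => rfl
  have hF : ∀ k, k ≤ F k := by
    intro k
    induction k with
    | zero => exact Nat.zero_le _
    | succ k ih =>
        have h1 : F k ≤ (g (F k)).1 := hg1 (F k)
        have : k + 1 ≤ (g (F k)).1 + 1 := by omega
        rw [hFsucc k]; omega
  set m : ℕ → ℕ := fun k => (g (F k)).1 with hmdef
  set n : ℕ → ℕ := fun k => (g (F k)).2 with hndef
  have hmt : Tendsto m atTop atTop :=
    tendsto_atTop_mono (fun k => (hF k).trans (hg1 (F k))) tendsto_id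
  have hnt : Tendsto n atTop atTop :=
    tendsto_atTop_mono (fun k => (hF k).trans (hg2 (F k))) tendsto_id
  set z : ℕ → X := fun k => y (m k) - y (n k) with hzdef
  have hznull : WeaklyNullSeq z := by
    intro f
    obtain ⟨l, hl⟩ := hwc f
    have := (hl.comp hmt).sub (hl.comp hnt)
    rw [sub_self] at this
    simpa [hzdef, Function.comp_def, map_sub] using this
  have hzr : Set.range z ⊆ A - A := by
    rintro - ⟨k, rfl⟩
    exact Set.sub_mem_sub (hy _) (hy _)
  have hznorm := hseq z (CoarsePLimited.mono p (CoarsePLimited.sub p hA) hzr) hznull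
  have hcontra := ge_of_tendsto hznorm (Eventually.of_forall fun k => by
    rw [hzdef]
    simpa [dist_eq_norm] using hg3 (F k))
  linarith

lemma relNormCompact_of_weaklyPrecompact (p : ℝ≥0∞) [Fact (1 ≤ p)] [CompleteSpace X]
    (hseq : ∀ z : ℕ → X, CoarsePLimited p (Set.range z) → WeaklyNullSeq z →
      Tendsto (fun n => ‖z n‖) atTop (𝓝 0))
    {A : Set X} (hA : CoarsePLimited p A) (hw : WeaklyPrecompact A) : RelNormCompact X A := by
  have key : ∀ b : ℕ → X, (∀ i, b i ∈ A) →
      ∃ L, ∃ φ : ℕ → ℕ, StrictMono φ ∧ Tendsto (b ∘ φ) atTop (𝓝 L) := by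
    intro b hb
    obtain ⟨φ, hφ, hwc⟩ := hw b hb
    have hc : CauchySeq (b ∘ φ) := cauchySeq_of_weaklyCauchy p hseq hA (fun i => hb _) hwc
    obtain ⟨L, hL⟩ := cauchySeq_tendsto_of_complete hc
    exact ⟨L, φ, hφ, hL⟩
  have hsc : IsSeqCompact (closure A) := by
    intro u hu
    have happrox : ∀ i : ℕ, ∃ a ∈ A, dist (u i) a < 1 / (i + 1) := by
      intro i
      exact Metric.mem_closure_iff.mp (hu i) _ (by positivity)
    choose a haA had using happrox
    obtain ⟨L, φ, hφ, hL⟩ := key a haA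
    refine ⟨L, mem_closure_of_tendsto hL (Eventually.of_forall fun i => haA _), φ, hφ, ?_⟩
    rw [tendsto_iff_dist_tendsto_zero]
    have h1 : Tendsto (fun i => dist (u (φ i)) (a (φ i)) + dist (a (φ i)) L) atTop (𝓝 0) := by
      have ha1 : Tendsto (fun i => dist (u (φ i)) (a (φ i))) atTop (𝓝 0) := by
        apply squeeze_zero (fun i => dist_nonneg) (fun i => ?_) tendsto_one_div_add_atTop_nhds_zero_nat
        refine (had (φ i)).le.trans ?_
        have hile : i ≤ φ i := hφ.le_apply
        have : (i : ℝ) + 1 ≤ (φ i : ℝ) + 1 := by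
          have := (Nat.cast_le (α := ℝ)).mpr hile
          linarith
        apply one_div_le_one_div_of_le (by positivity) this
      have ha2 : Tendsto (fun i => dist (a (φ i)) L) atTop (𝓝 0) :=
        tendsto_iff_dist_tendsto_zero.mp hL
      simpa using ha1.add ha2
    exact squeeze_zero (fun i => dist_nonneg) (fun i => dist_triangle _ _ _) h1
  exact hsc.isCompact

lemma weaklyPrecompact_of_relWeakCompact {A : Set X}
    (hA : IsCompact (closure ((toWeakSpace ℝ X) '' A))) (a : ℕ → X) (ha : ∀ n, a n ∈ A) :
    ∃ φ : ℕ → ℕ, StrictMono φ ∧ ∃ z : X,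
      ∀ f : X →L[ℝ] ℝ, Tendsto (fun n => f (a (φ n))) atTop (𝓝 (f z)) := by
  classical
  set Y := (Submodule.span ℝ (Set.range a)).topologicalClosure with hYdef
  have hYsep : TopologicalSpace.IsSeparable (Y : Set X) :=
    ((Set.countable_range a).isSeparable.span).closure
  obtain ⟨c, hc_count, hc_sub⟩ := hYsep
  obtain ⟨d, hd⟩ : ∃ d : ℕ → X, insert (0 : X) c = Set.range d :=
    (hc_count.insert 0).exists_eq_range (Set.insert_nonempty _ _)
  choose f hf1 hf2 using fun k => exists_dual_vector'' ℝ (d k)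
  -- separation on Y
  have sep : ∀ y : X, y ∈ Y → (∀ k, f k y = 0) → y = 0 := by
    intro y hy hfy
    by_contra hy0
    have hnorm : 0 < ‖y‖ := norm_pos_iff.mpr hy0
    have hyc : y ∈ closure (Set.range d) := by
      rw [← hd]
      exact closure_mono (Set.subset_insert _ _) (hc_sub hy)
    obtain ⟨w, hw, hdist⟩ := Metric.mem_closure_iff.mp hyc (‖y‖ / 3) (by linarith)
    obtain ⟨k, rfl⟩ := hw
    have h1 : ‖y‖ - ‖y‖ / 3 ≤ ‖d k‖ := by
      have := norm_sub_norm_le y (d k)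
      rw [← dist_eq_norm] at this
      linarith
    have h2 : |f k y - f k (d k)| ≤ ‖y‖ / 3 := by
      rw [← map_sub]
      calc |f k (y - d k)| ≤ ‖f k‖ * ‖y - d k‖ := (f k).le_opNorm _
      _ ≤ 1 * ‖y - d k‖ := by
          apply mul_le_mul_of_nonneg_right (hf1 k) (norm_nonneg _)
      _ ≤ ‖y‖ / 3 := by rw [one_mul, ← dist_eq_norm]; linarith
    rw [hfy k, hf2 k] at h2
    rw [abs_sub_comm, sub_zero] at h2
    have h2' : |‖d k‖| ≤ ‖y‖ / 3 := h2
    rw [abs_of_nonneg (norm_nonneg _)] at h2'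
    linarith
  -- Y is weakly closed
  have hYconv : Convex ℝ (Y : Set X) := Y.convex
  have hYcl : IsClosed (Y : Set X) := Submodule.isClosed_topologicalClosure _
  have hYweakcl : IsClosed (toWeakSpace ℝ X '' (Y : Set X)) := by
    have h := hYconv.toWeakSpace_closure (𝕜 := ℝ)
    rw [hYcl.closure_eq] at h
    rw [h]
    exact isClosed_closure
  set K : Set (WeakSpace ℝ X) := closure (toWeakSpace ℝ X '' A) ∩ (toWeakSpace ℝ X '' (Y : Set X))
    with hKdef
  have hK : IsCompact K := hA.inter_right hYweakcl
  set Φ : WeakSpace ℝ X → (ℕ → ℝ) := fun w k => f k ((toWeakSpace ℝ X).symm w) with hΦdef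
  have hΦc : Continuous Φ := by
    refine continuous_pi fun k => ?_
    exact WeakBilin.eval_continuous ((topDualPairing ℝ X).flip) (f k)
  have hΦinj : Set.InjOn Φ K := by
    rintro u ⟨-, y1, hy1, rfl⟩ v ⟨-, y2, hy2, rfl⟩ huv
    have hsub : (y1 - y2 : X) ∈ Y := Y.sub_mem hy1 hy2
    have : y1 - y2 = 0 := by
      refine sep _ hsub fun k => ?_
      have := congrFun huv k
      simp only [hΦdef, LinearEquiv.symm_apply_apply] at this
      rw [map_sub, this, sub_self]
    have := sub_eq_zero.mp this
    rw [this]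
  -- sequence is in K
  have hu : ∀ n, toWeakSpace ℝ X (a n) ∈ K := by
    intro n
    constructor
    · exact subset_closure (Set.mem_image_of_mem _ (ha n))
    · refine Set.mem_image_of_mem _ ?_
      exact (Submodule.le_topologicalClosure _) (Submodule.subset_span (Set.mem_range_self n))
  -- extract convergent subsequence via image in ℝ^ℕ
  have hKim : IsCompact (Φ '' K) := hK.image hΦc
  have hmem : ∀ n, Φ (toWeakSpace ℝ X (a n)) ∈ Φ '' K := fun n =>
    Set.mem_image_of_mem _ (hu n)
  obtain ⟨w, hwmem, φ, hφ, hconv⟩ := hKim.isSeqCompact hmem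
  obtain ⟨zw, hzK, hzw⟩ := hwmem
  -- homeomorphism K ≃ₜ Φ '' K
  haveI : CompactSpace K := isCompact_iff_compactSpace.mp hK
  set e : K ≃ Φ '' K := Equiv.Set.imageOfInjOn Φ K hΦinj with hedef
  have hec : Continuous e := by
    refine Continuous.subtype_mk ?_ _
    exact hΦc.comp continuous_subtype_val
  set h : K ≃ₜ Φ '' K := hec.homeoOfEquivCompactToT2 with hhdef
  set U : ℕ → K := fun n => ⟨toWeakSpace ℝ X (a (φ n)), hu (φ n)⟩ with hUdef
  have hhU : Tendsto (fun n => h (U n)) atTop (𝓝 (h ⟨zw, hzK⟩)) := by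
    rw [tendsto_subtype_rng]
    have : (fun n => (h (U n) : ℕ → ℝ)) = fun n => Φ (toWeakSpace ℝ X (a (φ n))) := rfl
    rw [this]
    have : ((h ⟨zw, hzK⟩ : Φ '' K) : ℕ → ℝ) = Φ zw := rfl
    rw [this, hzw]
    exact hconv
  have hUconv : Tendsto U atTop (𝓝 ⟨zw, hzK⟩) := by
    have h2 := (h.symm.continuous.tendsto _).comp hhU
    simpa [Function.comp_def] using h2
  have hWconv : Tendsto (fun n => toWeakSpace ℝ X (a (φ n))) atTop (𝓝 zw) :=
    (continuous_subtype_val.tendsto _).comp hUconv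
  refine ⟨φ, hφ, (toWeakSpace ℝ X).symm zw, fun g => ?_⟩
  have hgc : Continuous fun w : WeakSpace ℝ X => g ((toWeakSpace ℝ X).symm w) :=
    WeakBilin.eval_continuous ((topDualPairing ℝ X).flip) g
  have := (hgc.tendsto zw).comp hWconv
  simpa [Function.comp_def] using this

end Aux

theorem stmt9 (p : ℝ≥0∞) [Fact (1 ≤ p)] (hp : 1 < p) (hp' : p ≠ ⊤)
    {X : Type*} [NormedAddCommGroup X] [NormedSpace ℝ X] [CompleteSpace X] :
    ((∀ A : Set X, CoarsePLimited p A → RelWeakCompact X A → RelNormCompact X A) ↔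
      (∀ x : ℕ → X, CoarsePLimited p (Set.range x) → WeaklyNullSeq x →
        Filter.Tendsto (fun n => ‖x n‖) Filter.atTop (nhds 0))) ∧
    ((∀ x : ℕ → X, CoarsePLimited p (Set.range x) → WeaklyNullSeq x →
        Filter.Tendsto (fun n => ‖x n‖) Filter.atTop (nhds 0)) ↔
      (∀ A : Set X, CoarsePLimited p A → WeaklyPrecompact A → RelNormCompact X A)) := by
  constructor
  · constructor
    · intro h x hcpl hwn
      exact normNull_of_weaklyNull_relNormCompact hwn
        (h (Set.range x) hcpl (relWeakCompact_range_of_weaklyNull hwn))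
    · intro h A hcpl hrwc
      refine relNormCompact_of_weaklyPrecompact p h hcpl ?_
      intro b hb
      obtain ⟨φ, hφ, z, hz⟩ := weaklyPrecompact_of_relWeakCompact hrwc b hb
      exact ⟨φ, hφ, fun f => ⟨f z, hz f⟩⟩
  · constructor
    · intro h A hcpl hwp
      exact relNormCompact_of_weaklyPrecompact p h hcpl hwp
    · intro h x hcpl hwn
      exact normNull_of_weaklyNull_relNormCompact hwn
        (h (Set.range x) hcpl (weaklyPrecompact_range_of_weaklyNull hwn))
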